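/- Let λ₀, μ₀ ∈ ℝ with μ₀ > 0 and λ₀ + 2μ₀ > 0, and let Γ be the three-dimensional Kelvin matrix. Then each column of Γ solves the homogeneous elastostatic (Lamé) system away from the origin: for every x ∈ ℝ³ \ {0} and all indices j, k ∈ {1,2,3}, μ₀·Σ_{i=1}^{3} ∂²γ_{kj}/∂x_i²(x) + (λ₀ + μ₀)·∂/∂x_k ( Σ_{i=1}^{3} ∂γ_{ij}/∂x_i (x) ) = 0. -/

import Mathlib

/-- Partial derivative in the `i`-th coordinate direction of a scalar field on `ℝ³`. -/
noncomputable def pd3 (i : Fin 3) (f : EuclideanSpace ℝ (Fin 3) → ℝ)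
    (x : EuclideanSpace ℝ (Fin 3)) : ℝ :=
  fderiv ℝ f x (EuclideanSpace.single i 1)

/-- Entry `γ_{ij}` of the three-dimensional Kelvin matrix:
`γ_{ij}(x) = −(α/(2|x|)) δ_{ij} − (β/(2|x|³)) x_i x_j`. -/
noncomputable def kelvin3 (α β : ℝ) (i j : Fin 3) (x : EuclideanSpace ℝ (Fin 3)) : ℝ :=
  -(α / (2 * ‖x‖)) * (if i = j then (1 : ℝ) else 0) - (β / (2 * ‖x‖ ^ 3)) * x i * x j

local notation "E3" => EuclideanSpace ℝ (Fin 3)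

namespace Kelvin3Aux

/-- Kronecker delta. -/
noncomputable def kd (i j : Fin 3) : ℝ := if i = j then 1 else 0

/-- First partial derivative `∂_k γ_{ij}`. -/
noncomputable def D1 (α β : ℝ) (i j k : Fin 3) (y : E3) : ℝ :=
  α/2 * kd i j * y k * (‖y‖^3)⁻¹
  + 3*β/2 * y i * y j * y k * (‖y‖^5)⁻¹
  - β/2 * (kd i k * y j + kd j k * y i) * (‖y‖^3)⁻¹

/-- Second partial derivative `∂_l ∂_k γ_{ij}`. -/
noncomputable def D2 (α β : ℝ) (i j k l : Fin 3) (y : E3) : ℝ :=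
  α/2 * kd i j * (kd k l * (‖y‖^3)⁻¹ - 3 * y k * y l * (‖y‖^5)⁻¹)
  + 3*β/2 * ((kd i l * y j * y k + kd j l * y i * y k + kd k l * y i * y j) * (‖y‖^5)⁻¹
      - 5 * y i * y j * y k * y l * (‖y‖^7)⁻¹)
  - β/2 * ((kd i k * kd j l + kd j k * kd i l) * (‖y‖^3)⁻¹
      - 3 * (kd i k * y j + kd j k * y i) * y l * (‖y‖^5)⁻¹)

lemma hcoord (m : Fin 3) (y : E3) :
    HasFDerivAt (fun z : E3 => z m) (EuclideanSpace.proj (𝕜 := ℝ) m) y :=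
  (EuclideanSpace.proj (𝕜 := ℝ) m).hasFDerivAt

lemma innerSL_single (y : E3) (k : Fin 3) :
    (innerSL ℝ y) (EuclideanSpace.single k 1) = y k := by
  simp [EuclideanSpace.inner_single_right]

lemma proj_single (m k : Fin 3) :
    (EuclideanSpace.proj (𝕜 := ℝ) m) (EuclideanSpace.single k (1:ℝ)) = kd m k := by
  simp [EuclideanSpace.single_apply, kd, eq_comm]

lemma hasFDerivAt_norm3 {x : E3} (hx : x ≠ 0) :
    HasFDerivAt (fun y : E3 => ‖y‖) (‖x‖⁻¹ • innerSL ℝ x) x := by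
  have h1 : HasFDerivAt (fun y : E3 => ‖y‖ ^ 2) ((2:ℕ) • innerSL ℝ x) x :=
    (hasStrictFDerivAt_norm_sq x).hasFDerivAt
  have hr : ‖x‖ ≠ 0 := norm_ne_zero_iff.mpr hx
  have hne : (‖x‖^2 : ℝ) ≠ 0 := pow_ne_zero _ hr
  have h2 := (Real.hasDerivAt_sqrt hne).comp_hasFDerivAt x h1
  have h3 : (Real.sqrt ∘ fun y : E3 => ‖y‖^2) = fun y : E3 => ‖y‖ := by
    funext y; simp [Real.sqrt_sq (norm_nonneg y)]
  rw [h3] at h2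
  refine h2.congr_fderiv (Eq.symm ?_)
  ext v
  simp [Real.sqrt_sq (norm_nonneg x)]
  field_simp

lemma hasFDerivAt_invnorm (n : ℕ) {x : E3} (hx : x ≠ 0) :
    HasFDerivAt (fun y : E3 => (‖y‖ ^ n)⁻¹) ((-(n:ℝ) / ‖x‖ ^ (n+2)) • innerSL ℝ x) x := by
  have hr : ‖x‖ ≠ 0 := norm_ne_zero_iff.mpr hx
  have h1 : HasDerivAt (fun t : ℝ => (t ^ n)⁻¹)
      (-(↑n * ‖x‖ ^ (n-1)) / (‖x‖ ^ n) ^ 2) ‖x‖ :=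
    (hasDerivAt_pow n ‖x‖).inv (pow_ne_zero _ hr)
  have h2 := h1.comp_hasFDerivAt x (hasFDerivAt_norm3 hx)
  refine h2.congr_fderiv (Eq.symm ?_)
  ext v
  simp [smul_smul]
  cases n with
  | zero => simp
  | succ m =>
    left
    simp only [Nat.add_sub_cancel, Nat.add_sub_cancel_left]
    field_simp
    ring

lemma kelvin3_deriv (α β : ℝ) (i j : Fin 3) {y : E3} (hy : y ≠ 0) :
    ∃ L : E3 →L[ℝ] ℝ, HasFDerivAt (kelvin3 α β i j) L y ∧
      ∀ k, L (EuclideanSpace.single k 1) = D1 α β i j k y := by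
  have hr : ‖y‖ ≠ 0 := norm_ne_zero_iff.mpr hy
  have h1 := hasFDerivAt_invnorm 1 hy
  have h3 := hasFDerivAt_invnorm 3 hy
  have hK : kelvin3 α β i j = fun z : E3 =>
      (-(α/2) * kd i j) * (‖z‖^1)⁻¹ + (-(β/2)) * ((‖z‖^3)⁻¹ * z i * z j) := by
    funext z
    simp only [kelvin3, kd, div_eq_mul_inv, mul_inv, pow_one]
    ring
  have hF := (h1.const_mul (-(α/2) * kd i j)).add
    (((h3.mul (hcoord i y)).mul (hcoord j y)).const_mul (-(β/2)))
  refine ⟨_, by rw [hK]; exact hF, fun k => ?_⟩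
  simp only [ContinuousLinearMap.add_apply, ContinuousLinearMap.smul_apply,
    ContinuousLinearMap.coe_smul', Pi.smul_apply, innerSL_single, proj_single,
    smul_eq_mul, D1, Pi.mul_apply]
  field_simp
  ring

lemma D1_deriv (α β : ℝ) (i j k : Fin 3) {y : E3} (hy : y ≠ 0) :
    ∃ L : E3 →L[ℝ] ℝ, HasFDerivAt (D1 α β i j k) L y ∧
      ∀ l, L (EuclideanSpace.single l 1) = D2 α β i j k l y := by
  have hr : ‖y‖ ≠ 0 := norm_ne_zero_iff.mpr hy
  have h3 := hasFDerivAt_invnorm 3 hy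
  have h5 := hasFDerivAt_invnorm 5 hy
  have hK : D1 α β i j k = fun z : E3 =>
      (α/2 * kd i j) * (z k * (‖z‖^3)⁻¹)
      + (3*β/2) * (z i * z j * (z k * (‖z‖^5)⁻¹))
      - ((β/2 * kd i k) * (z j * (‖z‖^3)⁻¹) + (β/2 * kd j k) * (z i * (‖z‖^3)⁻¹)) := by
    funext z; simp only [D1]; ring
  have hF := ((((hcoord k y).mul h3).const_mul (α/2 * kd i j)).add
      ((((hcoord i y).mul (hcoord j y)).mul ((hcoord k y).mul h5)).const_mul (3*β/2))).sub
    ((((hcoord j y).mul h3).const_mul (β/2 * kd i k)).add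
      (((hcoord i y).mul h3).const_mul (β/2 * kd j k)))
  refine ⟨_, by rw [hK]; exact hF, fun l => ?_⟩
  simp only [ContinuousLinearMap.add_apply, ContinuousLinearMap.sub_apply,
    ContinuousLinearMap.smul_apply, ContinuousLinearMap.coe_smul', Pi.smul_apply,
    innerSL_single, proj_single, smul_eq_mul, D2, Pi.mul_apply]
  field_simp
  ring

lemma norm_sq_eq (x : E3) : ‖x‖ ^ 2 = x 0 ^ 2 + x 1 ^ 2 + x 2 ^ 2 := by
  rw [EuclideanSpace.norm_eq, Real.sq_sqrt (by positivity)]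
  simp [Fin.sum_univ_three, Real.norm_eq_abs, sq_abs]

lemma T1 : ∑ i : Fin 3, kd i i = 3 := by simp [Fin.sum_univ_three, kd]
lemma T2 (x : E3) : ∑ i : Fin 3, x i ^ 2 = ‖x‖ ^ 2 := by
  rw [norm_sq_eq, Fin.sum_univ_three]
lemma T3 (k : Fin 3) (x : E3) : ∑ i : Fin 3, kd k i * x i = x k := by
  fin_cases k <;> simp [Fin.sum_univ_three, kd]
lemma T3' (k : Fin 3) (x : E3) : ∑ i : Fin 3, kd i k * x i = x k := by
  fin_cases k <;> simp [Fin.sum_univ_three, kd]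
lemma T4 (k j : Fin 3) : ∑ i : Fin 3, kd k i * kd j i = kd k j := by
  fin_cases k <;> fin_cases j <;> simp [Fin.sum_univ_three, kd]
lemma T4' (j k : Fin 3) : ∑ i : Fin 3, kd i j * kd i k = kd j k := by
  fin_cases k <;> fin_cases j <;> simp [Fin.sum_univ_three, kd]
lemma T4'' (j k : Fin 3) : ∑ i : Fin 3, kd j i * kd i k = kd j k := by
  fin_cases k <;> fin_cases j <;> simp [Fin.sum_univ_three, kd]

lemma sum1 (α β : ℝ) (j k : Fin 3) {x : E3} (hx : x ≠ 0) :
    ∑ i, D2 α β k j i i x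
      = β * (3 * x k * x j * (‖x‖^5)⁻¹ - kd k j * (‖x‖^3)⁻¹) := by
  have hr : ‖x‖ ≠ 0 := norm_ne_zero_iff.mpr hx
  have hdec : ∀ i, D2 α β k j i i x =
      (α/2 * kd k j * (‖x‖^3)⁻¹ + 3*β/2 * x k * x j * (‖x‖^5)⁻¹) * kd i i
      + (-(3*α/2) * kd k j * (‖x‖^5)⁻¹ - 15*β/2 * x k * x j * (‖x‖^7)⁻¹) * x i ^ 2
      + (3*β * x j * (‖x‖^5)⁻¹) * (kd k i * x i)
      + (3*β * x k * (‖x‖^5)⁻¹) * (kd j i * x i)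
      + (-β * (‖x‖^3)⁻¹) * (kd k i * kd j i) := by
    intro i; simp only [D2]; ring
  rw [Finset.sum_congr rfl fun i _ => hdec i]
  simp only [Finset.sum_add_distrib, ← Finset.mul_sum, T1, T2, T3, T4]
  have hkd : kd j k = kd k j := by simp [kd, eq_comm]
  have h2 : ‖x‖ ^ 2 ≠ 0 := pow_ne_zero _ hr
  field_simp
  ring

lemma sum2 (α β : ℝ) (j k : Fin 3) {x : E3} (hx : x ≠ 0) :
    ∑ i, D2 α β i j i k x
      = ((α - β)/2) * (kd k j * (‖x‖^3)⁻¹ - 3 * x k * x j * (‖x‖^5)⁻¹) := by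
  have hr : ‖x‖ ≠ 0 := norm_ne_zero_iff.mpr hx
  have hdec : ∀ i, D2 α β i j i k x =
      (α/2 * (‖x‖^3)⁻¹) * (kd i j * kd i k)
      + (-(3*α/2) * x k * (‖x‖^5)⁻¹) * (kd i j * x i)
      + (3*β * x j * (‖x‖^5)⁻¹) * (kd i k * x i)
      + (3*β/2 * kd j k * (‖x‖^5)⁻¹ - 15*β/2 * x j * x k * (‖x‖^7)⁻¹) * x i ^ 2
      + (-(β/2) * kd j k * (‖x‖^3)⁻¹ + 3*β/2 * x j * x k * (‖x‖^5)⁻¹) * kd i i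
      + (-(β/2) * (‖x‖^3)⁻¹) * (kd j i * kd i k)
      + (3*β/2 * x k * (‖x‖^5)⁻¹) * (kd j i * x i) := by
    intro i; simp only [D2]; ring
  rw [Finset.sum_congr rfl fun i _ => hdec i]
  simp only [Finset.sum_add_distrib, ← Finset.mul_sum, T1, T2, T3, T3', T4, T4', T4'']
  have hkd : ∀ a b : Fin 3, kd a b = kd b a := fun a b => by simp [kd, eq_comm]
  have h2 : ‖x‖ ^ 2 ≠ 0 := pow_ne_zero _ hr
  rw [hkd j k]
  field_simp
  ring

end Kelvin3Aux

open Kelvin3Aux in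
theorem kelvin3_solves_lame
    (l0 m0 : ℝ) (hm : 0 < m0) (hl : 0 < l0 + 2 * m0)
    (α β : ℝ)
    (hα : α = (l0 + 3 * m0) / (4 * Real.pi * m0 * (l0 + 2 * m0)))
    (hβ : β = (l0 + m0) / (4 * Real.pi * m0 * (l0 + 2 * m0)))
    (x : EuclideanSpace ℝ (Fin 3)) (hx : x ≠ 0) (j k : Fin 3) :
    m0 * (∑ i, pd3 i (fun y => pd3 i (kelvin3 α β k j) y) x)
      + (l0 + m0) * pd3 k (fun y => ∑ i, pd3 i (kelvin3 α β i j) y) x = 0 := by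
  have hmem : {y : E3 | y ≠ 0} ∈ nhds x := isOpen_ne.mem_nhds hx
  have hd1 : ∀ (a b c : Fin 3) (y : E3), y ≠ 0 →
      pd3 c (kelvin3 α β a b) y = D1 α β a b c y := by
    intro a b c y hy
    obtain ⟨L, hL, hLe⟩ := kelvin3_deriv α β a b hy
    rw [pd3, hL.fderiv, hLe]
  have hd2 : ∀ a b c l : Fin 3, pd3 l (D1 α β a b c) x = D2 α β a b c l x := by
    intro a b c l
    obtain ⟨L, hL, hLe⟩ := D1_deriv α β a b c hx
    rw [pd3, hL.fderiv, hLe]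
  have hdiff : ∀ a b c : Fin 3, DifferentiableAt ℝ (D1 α β a b c) x := by
    intro a b c
    obtain ⟨L, hL, _⟩ := D1_deriv α β a b c hx
    exact hL.differentiableAt
  have e1 : ∀ i : Fin 3,
      pd3 i (fun y => pd3 i (kelvin3 α β k j) y) x = D2 α β k j i i x := by
    intro i
    have hev : (fun y => pd3 i (kelvin3 α β k j) y) =ᶠ[nhds x] D1 α β k j i := by
      filter_upwards [hmem] with y hy
      exact hd1 k j i y hy
    rw [pd3, hev.fderiv_eq, ← pd3, hd2]
  have e2 : pd3 k (fun y => ∑ i, pd3 i (kelvin3 α β i j) y) x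
      = ∑ i : Fin 3, D2 α β i j i k x := by
    have hev : (fun y => ∑ i, pd3 i (kelvin3 α β i j) y)
        =ᶠ[nhds x] (fun y => ∑ i : Fin 3, D1 α β i j i y) := by
      filter_upwards [hmem] with y hy
      exact Finset.sum_congr rfl fun i _ => hd1 i j i y hy
    rw [pd3, hev.fderiv_eq, fderiv_fun_sum (fun i _ => hdiff i j i)]
    simp only [ContinuousLinearMap.coe_sum', Finset.sum_apply]
    exact Finset.sum_congr rfl fun i _ => hd2 i j i k
  have t1 : (∑ i, pd3 i (fun y => pd3 i (kelvin3 α β k j) y) x)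
      = ∑ i : Fin 3, D2 α β k j i i x :=
    Finset.sum_congr rfl fun i _ => e1 i
  rw [t1, e2, sum1 α β j k hx, sum2 α β j k hx]
  have hπ : Real.pi ≠ 0 := Real.pi_ne_zero
  have hc : m0 * β - (l0 + m0) * ((α - β)/2) = 0 := by
    rw [hα, hβ]
    field_simp
    ring
  linear_combination (3 * x k * x j * (‖x‖^5)⁻¹ - kd k j * (‖x‖^3)⁻¹) * hc
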